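/- Let α be a measurable space, k : α × α → ℝ a bounded measurable function, and P, Q Borel probability measures on α. Let n ≥ 2 and let X₁, …, Xₙ, Y₁, …, Yₙ be random variables on a probability space such that the whole family is independent, each Xᵢ has distribution P, and each Yᵢ has distribution Q. Then E[ (1/(n(n−1))) Σ_{i≠j} ( k(Xᵢ, Xⱼ) + k(Yᵢ, Yⱼ) − 2 k(Xᵢ, Yⱼ) ) ] = ∫∫ k d(P⊗P) + ∫∫ k d(Q⊗Q) − 2 ∫∫ k d(P⊗Q); that is, the estimator M̂_k² is an unbiased estimator of the squared MMD expressed through kernel expectations. -/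

import Mathlib

open MeasureTheory ProbabilityTheory

/-- The estimator `M̂_k²` is an unbiased estimator of the squared MMD: for independent
samples `X₁,…,Xₙ ~ P` and `Y₁,…,Yₙ ~ Q` (the whole family independent), the expectation
of `(1/(n(n−1))) Σ_{i≠j} (k(Xᵢ,Xⱼ) + k(Yᵢ,Yⱼ) − 2 k(Xᵢ,Yⱼ))` equals
`∫∫ k d(P⊗P) + ∫∫ k d(Q⊗Q) − 2 ∫∫ k d(P⊗Q)`. -/
theorem mmd_unbiased_estimator
    {α : Type*} [MeasurableSpace α]
    (k : α × α → ℝ) (hk : Measurable k) (hkb : ∃ C : ℝ, ∀ p, |k p| ≤ C)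
    (P Q : Measure α) [IsProbabilityMeasure P] [IsProbabilityMeasure Q]
    {Ω : Type*} [MeasurableSpace Ω] (μ : Measure Ω) [IsProbabilityMeasure μ]
    (n : ℕ) (hn : 2 ≤ n)
    (X Y : Fin n → Ω → α)
    (hXm : ∀ i, Measurable (X i)) (hYm : ∀ i, Measurable (Y i))
    (hindep : iIndepFun (β := fun _ : (Fin n) ⊕ (Fin n) => α) (Sum.elim X Y) μ)
    (hX : ∀ i, μ.map (X i) = P) (hY : ∀ i, μ.map (Y i) = Q) :
    ∫ ω, (1 / ((n : ℝ) * ((n : ℝ) - 1))) *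
        ∑ p ∈ Finset.univ.filter (fun p : Fin n × Fin n => p.1 ≠ p.2),
          (k (X p.1 ω, X p.2 ω) + k (Y p.1 ω, Y p.2 ω) - 2 * k (X p.1 ω, Y p.2 ω)) ∂μ =
      (∫ p, k p ∂(P.prod P)) + (∫ p, k p ∂(Q.prod Q)) - 2 * ∫ p, k p ∂(P.prod Q) := by
  obtain ⟨C, hC⟩ := hkb
  -- integrability of composed kernel evaluations
  have hint : ∀ (f g : Ω → α), Measurable f → Measurable g →
      Integrable (fun ω => k (f ω, g ω)) μ := by
    intro f g hf hg
    refine ⟨(hk.comp (hf.prodMk hg)).aestronglyMeasurable, ?_⟩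
    apply HasFiniteIntegral.of_bounded (C := C)
    filter_upwards with ω
    exact hC _
  -- key computation
  have key : ∀ (f g : Ω → α), Measurable f → Measurable g → IndepFun f g μ →
      ∀ (P' Q' : Measure α), μ.map f = P' → μ.map g = Q' →
      ∫ ω, k (f ω, g ω) ∂μ = ∫ p, k p ∂(P'.prod Q') := by
    intro f g hf hg hfg P' Q' hP' hQ'
    have hmap : μ.map (fun ω => (f ω, g ω)) = P'.prod Q' := by
      rw [(indepFun_iff_map_prod_eq_prod_map_map hf.aemeasurable hg.aemeasurable).mp hfg,
        hP', hQ']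
    rw [← hmap, integral_map (hf.prodMk hg).aemeasurable hk.aestronglyMeasurable]
  have hXX : ∀ i j : Fin n, i ≠ j →
      ∫ ω, k (X i ω, X j ω) ∂μ = ∫ p, k p ∂(P.prod P) := by
    intro i j hij
    have h := hindep.indepFun (i := Sum.inl i) (j := Sum.inl j) (by simp [hij])
    exact key _ _ (hXm i) (hXm j) h P P (hX i) (hX j)
  have hYY : ∀ i j : Fin n, i ≠ j →
      ∫ ω, k (Y i ω, Y j ω) ∂μ = ∫ p, k p ∂(Q.prod Q) := by
    intro i j hij
    have h := hindep.indepFun (i := Sum.inr i) (j := Sum.inr j) (by simp [hij])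
    exact key _ _ (hYm i) (hYm j) h Q Q (hY i) (hY j)
  have hXY : ∀ i j : Fin n,
      ∫ ω, k (X i ω, Y j ω) ∂μ = ∫ p, k p ∂(P.prod Q) := by
    intro i j
    have h := hindep.indepFun (i := Sum.inl i) (j := Sum.inr j) (by simp)
    exact key _ _ (hXm i) (hYm j) h P Q (hX i) (hY j)
  set S := Finset.univ.filter (fun p : Fin n × Fin n => p.1 ≠ p.2) with hS
  have hterm : ∀ p : Fin n × Fin n, p ∈ S →
      ∫ ω, (k (X p.1 ω, X p.2 ω) + k (Y p.1 ω, Y p.2 ω) - 2 * k (X p.1 ω, Y p.2 ω)) ∂μ =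
      (∫ p, k p ∂(P.prod P)) + (∫ p, k p ∂(Q.prod Q)) - 2 * ∫ p, k p ∂(P.prod Q) := by
    intro p hp
    have hp' : p.1 ≠ p.2 := by simpa [hS] using hp
    have h1 := hint _ _ (hXm p.1) (hXm p.2)
    have h2 := hint _ _ (hYm p.1) (hYm p.2)
    have h3 := hint _ _ (hXm p.1) (hYm p.2)
    have h12 : Integrable (fun ω => k (X p.1 ω, X p.2 ω) + k (Y p.1 ω, Y p.2 ω)) μ := h1.add h2
    have h3' : Integrable (fun ω => 2 * k (X p.1 ω, Y p.2 ω)) μ := h3.const_mul 2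
    rw [integral_sub h12 h3', integral_add h1 h2, integral_const_mul,
      hXX _ _ hp', hYY _ _ hp', hXY]
  have hintsum : Integrable (fun ω => ∑ p ∈ S,
      (k (X p.1 ω, X p.2 ω) + k (Y p.1 ω, Y p.2 ω) - 2 * k (X p.1 ω, Y p.2 ω))) μ :=
    integrable_finset_sum _ (fun p _ =>
      ((hint _ _ (hXm p.1) (hXm p.2)).add (hint _ _ (hYm p.1) (hYm p.2))).sub
        ((hint _ _ (hXm p.1) (hYm p.2)).const_mul 2))
  rw [integral_const_mul, integral_finset_sum _ (fun p _ =>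
      ((hint _ _ (hXm p.1) (hXm p.2)).add (hint _ _ (hYm p.1) (hYm p.2))).sub
        ((hint _ _ (hXm p.1) (hYm p.2)).const_mul 2)),
    Finset.sum_congr rfl hterm, Finset.sum_const]
  have hcard : (S.card : ℝ) = (n : ℝ) * ((n : ℝ) - 1) := by
    have : S = (Finset.univ : Finset (Fin n)).offDiag := by
      ext p
      simp [hS, Finset.mem_offDiag]
    rw [this, Finset.offDiag_card]
    have h1 : (1 : ℕ) ≤ n := le_trans (by norm_num) hn
    simp only [Finset.card_univ, Fintype.card_fin]
    have : n ≤ n * n := Nat.le_mul_of_pos_left n (by omega)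
    push_cast [Nat.cast_sub this]
    ring
  rw [nsmul_eq_mul, hcard]
  have hne : (n : ℝ) * ((n : ℝ) - 1) ≠ 0 := by
    have : (2 : ℝ) ≤ (n : ℝ) := by exact_mod_cast hn
    nlinarith
  field_simp
  exact mul_div_cancel_left₀ _ (by have : (2 : ℝ) ≤ (n : ℝ) := (by exact_mod_cast hn); linarith)
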